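/- Let I ⊆ R = C[x_1,...,x_N] be a monomial ideal, where R carries a positive multigrading with x_i of weight w_i, and let I' ⊆ R' = C[x_1,...,x_N,y] be the partial polarization of I with respect to x_i, where y is assigned the weight w_i. Then the multigraded K-polynomials of R/I and R'/I' are equal: K_{R/I}(t) = K_{R'/I'}(t). -/

import Mathlib

open MvPolynomial

attribute [local instance] Classical.propDecidable

/-- dim_C of the multidegree-`a` piece of `R/I` for weights `w`. -/
noncomputable def mgradedDim {τ : Type*} {d : ℕ} (w : τ → (Fin d →₀ ℕ))
    (I : Ideal (MvPolynomial τ ℂ)) (a : Fin d →₀ ℕ) : ℕ :=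
  Module.finrank ℂ ((MvPolynomial.weightedHomogeneousSubmodule ℂ w a).map
    (Ideal.Quotient.mkₐ ℂ I).toLinearMap)

/-- The multigraded Hilbert series of `R/I` as a multivariate power series. -/
noncomputable def hilbSeries {τ : Type*} {d : ℕ} (w : τ → (Fin d →₀ ℕ))
    (I : Ideal (MvPolynomial τ ℂ)) : MvPowerSeries (Fin d) ℤ :=
  fun a => (mgradedDim w I a : ℤ)

/-- `K` is the multigraded K-polynomial of `R/I`:
`K(t) = ∏ᵢ (1 - t^{wᵢ}) · HS_{R/I}(t)` as multivariate power series. -/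
noncomputable def IsKPolynomial {τ : Type*} [Fintype τ] {d : ℕ} (w : τ → (Fin d →₀ ℕ))
    (I : Ideal (MvPolynomial τ ℂ)) (K : MvPolynomial (Fin d) ℤ) : Prop :=
  (K : MvPowerSeries (Fin d) ℤ) =
    ((∏ v : τ, (1 - MvPolynomial.monomial (w v) (1 : ℤ)) : MvPolynomial (Fin d) ℤ) :
        MvPowerSeries (Fin d) ℤ) *
      hilbSeries w I

/-- Sum of the terms of lowest total degree of a polynomial. -/
noncomputable def lowestTerms {d : ℕ} (q : MvPolynomial (Fin d) ℤ) : MvPolynomial (Fin d) ℤ :=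
  ∑ a ∈ q.support.filter fun a => ∀ b ∈ q.support,
      (a.sum fun _ n => n) ≤ (b.sum fun _ n => n),
    MvPolynomial.monomial a (q.coeff a)

/-- The multidegree read off from a K-polynomial: the lowest-degree terms of `K(1 - t)`. -/
noncomputable def multidegOf {d : ℕ} (K : MvPolynomial (Fin d) ℤ) : MvPolynomial (Fin d) ℤ :=
  lowestTerms (MvPolynomial.aeval (fun i => (1 - MvPolynomial.X i : MvPolynomial (Fin d) ℤ)) K)

/-- Embedding of exponent vectors along `some : Fin N → Option (Fin N)`
(where `none` plays the role of the new variable `y`). -/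
noncomputable def embedExp {N : ℕ} (a : Fin N →₀ ℕ) : Option (Fin N) →₀ ℕ :=
  Finsupp.mapDomain some a

/-- The exponent of a partially polarized generator: if `x_i` occurs with exponent `≥ 2`
in `x^a`, replace one factor of `x_i` by the new variable `y` (indexed by `none`). -/
noncomputable def partialPolarGen {N : ℕ} (i : Fin N) (a : Fin N →₀ ℕ) :
    Option (Fin N) →₀ ℕ :=
  if 2 ≤ a i then embedExp (a - Finsupp.single i 1) + Finsupp.single none 1 else embedExp a


section Aux

open Finsupp

variable {τ : Type*} [Fintype τ] {d : ℕ}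

omit [Fintype τ] in
lemma weight_mono (w : τ → (Fin d →₀ ℕ)) {u v : τ →₀ ℕ} (h : u ≤ v) :
    weight w u ≤ weight w v := by
  obtain ⟨c, rfl⟩ := le_iff_exists_add.mp h
  simp [map_add]

omit [Fintype τ] in
lemma weight_single_eq (w : τ → (Fin d →₀ ℕ)) (t : τ) (n : ℕ) :
    weight w (Finsupp.single t n) = n • w t := by
  rw [Finsupp.weight_apply, Finsupp.sum_single_index]
  simp

omit [Fintype τ] in
lemma single_le_self (b : τ →₀ ℕ) (t : τ) : Finsupp.single t (b t) ≤ b := by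
  intro s
  classical
  rcases eq_or_ne t s with rfl | hs
  · simp
  · simp [Finsupp.single_apply, hs]

lemma finite_weight_eq (w : τ → (Fin d →₀ ℕ)) (hpos : ∀ t, w t ≠ 0) (a : Fin d →₀ ℕ) :
    {b : τ →₀ ℕ | weight w b = a}.Finite := by
  set M : ℕ := ∑ k, a k with hM
  have hsub : {b : τ →₀ ℕ | weight w b = a} ⊆
      Set.Iic (equivFunOnFinite.symm fun _ : τ => M) := by
    intro b hb t
    show _ ≤ M
    obtain ⟨k, hk⟩ : ∃ k, w t k ≠ 0 := by
      by_contra hc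
      push_neg at hc
      exact hpos t (Finsupp.ext fun k => hc k)
    have h1 : (b t) • w t ≤ a := by
      rw [← hb, ← weight_single_eq w t (b t)]
      exact weight_mono w (single_le_self b t)
    have h2 : b t * w t k ≤ a k := by
      simpa using h1 k
    calc b t ≤ b t * w t k := Nat.le_mul_of_pos_right _ (Nat.pos_of_ne_zero hk)
    _ ≤ a k := h2
    _ ≤ M := by
      rw [hM]
      exact Finset.single_le_sum (fun _ _ => Nat.zero_le _) (Finset.mem_univ k)
  exact (Set.finite_Iic _).subset hsub

omit [Fintype τ] in
lemma whs_eq_span (w : τ → (Fin d →₀ ℕ)) (a : Fin d →₀ ℕ) :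
    weightedHomogeneousSubmodule ℂ w a =
      Submodule.span ℂ ((fun b => (monomial b (1:ℂ) : MvPolynomial τ ℂ)) ''
        {b | weight w b = a}) := by
  apply le_antisymm
  · intro p hp
    rw [mem_weightedHomogeneousSubmodule] at hp
    rw [p.as_sum]
    apply Submodule.sum_mem
    intro m hm
    have : (monomial m (coeff m p) : MvPolynomial τ ℂ) = (coeff m p) • monomial m 1 := by
      rw [smul_monomial, smul_eq_mul, mul_one]
    rw [this]
    exact Submodule.smul_mem _ _ (Submodule.subset_span ⟨m, hp (MvPolynomial.mem_support_iff.mp hm), rfl⟩)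
  · rw [Submodule.span_le]
    rintro _ ⟨b, hb, rfl⟩
    exact isWeightedHomogeneous_monomial w b 1 hb

lemma mgradedDim_span_monomials (w : τ → (Fin d →₀ ℕ)) (hpos : ∀ t, w t ≠ 0)
    (S : Set (τ →₀ ℕ)) (a : Fin d →₀ ℕ) :
    mgradedDim w (Ideal.span ((fun s => monomial s (1:ℂ)) '' S)) a
      = Nat.card {b : τ →₀ ℕ | weight w b = a ∧ ∀ s ∈ S, ¬ s ≤ b} := by
  classical
  set I : Ideal (MvPolynomial τ ℂ) := Ideal.span ((fun s => monomial s (1:ℂ)) '' S) with hI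
  set T : Set (τ →₀ ℕ) := {b | weight w b = a ∧ ∀ s ∈ S, ¬ s ≤ b} with hT
  have hTfin : T.Finite := (finite_weight_eq w hpos a).subset (fun b hb => hb.1)
  haveI : Fintype T := hTfin.fintype
  set L := (Ideal.Quotient.mkₐ ℂ I).toLinearMap with hL
  set v : T → (MvPolynomial τ ℂ ⧸ I) := fun b => L (monomial (b : τ →₀ ℕ) 1) with hv
  -- the image submodule is the span of v
  have hspan : (weightedHomogeneousSubmodule ℂ w a).map L = Submodule.span ℂ (Set.range v) := by
    rw [whs_eq_span, Submodule.map_span, Set.image_image]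
    apply le_antisymm
    · rw [Submodule.span_le]
      rintro _ ⟨b, hb, rfl⟩
      by_cases hstd : ∀ s ∈ S, ¬ s ≤ b
      · exact Submodule.subset_span ⟨⟨b, hb, hstd⟩, rfl⟩
      · push_neg at hstd
        obtain ⟨s, hsS, hsb⟩ := hstd
        have : (monomial b (1:ℂ)) ∈ I := by
          rw [hI, mem_ideal_span_monomial_image]
          intro xi hxi
          rw [support_monomial, if_neg one_ne_zero] at hxi
          simp only [Finset.mem_singleton] at hxi
          exact ⟨s, hsS, hxi ▸ hsb⟩
        have hz : L (monomial b (1:ℂ)) = 0 := by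
          show Ideal.Quotient.mkₐ ℂ I _ = 0
          rw [Ideal.Quotient.mkₐ_eq_mk, Ideal.Quotient.eq_zero_iff_mem]
          exact this
        show L (monomial b 1) ∈ _
        rw [hz]
        exact Submodule.zero_mem _
    · rw [Submodule.span_le]
      rintro _ ⟨⟨b, hb⟩, rfl⟩
      exact Submodule.subset_span ⟨b, hb.1, rfl⟩
  -- linear independence of v
  have hli : LinearIndependent ℂ v := by
    rw [linearIndependent_iff']
    intro t f hsum b0 hb0
    set p : MvPolynomial τ ℂ := ∑ b ∈ t, f b • monomial (b : τ →₀ ℕ) 1 with hp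
    have hLp : L p = 0 := by
      have : L p = ∑ b ∈ t, f b • v b := by
        rw [hp, map_sum]
        simp only [map_smul, hv]
      rw [this, hsum]
    have hpI : p ∈ I := by
      rw [← Ideal.Quotient.eq_zero_iff_mem, ← Ideal.Quotient.mkₐ_eq_mk ℂ]
      exact hLp
    by_contra hf0
    have hcoeff : coeff (b0 : τ →₀ ℕ) p = f b0 := by
      rw [hp, coeff_sum]
      rw [Finset.sum_eq_single b0]
      · simp [coeff_monomial]
      · intro b hb hbne
        have : (b : τ →₀ ℕ) ≠ (b0 : τ →₀ ℕ) := fun h => hbne (Subtype.ext h)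
        simp [coeff_monomial, this]
      · intro h; exact absurd hb0 h
    have hsup : (b0 : τ →₀ ℕ) ∈ p.support := by
      rw [MvPolynomial.mem_support_iff, hcoeff]; exact hf0
    obtain ⟨s, hsS, hsle⟩ := mem_ideal_span_monomial_image.mp (hI ▸ hpI) _ hsup
    exact b0.2.2 s hsS hsle
  rw [mgradedDim, hspan, finrank_span_eq_card hli, Nat.card_eq_fintype_card]

noncomputable def resOpt {N : ℕ} (c : Option (Fin N) →₀ ℕ) : Fin N →₀ ℕ :=
  Finsupp.comapDomain some c (Option.some_injective _).injOn

def wOpt {N d : ℕ} (i : Fin N) (w : Fin N → (Fin d →₀ ℕ)) :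
    Option (Fin N) → (Fin d →₀ ℕ) := fun o => o.elim (w i) w

variable {N d : ℕ}

lemma embedExp_apply_some (b : Fin N →₀ ℕ) (x : Fin N) : embedExp b (some x) = b x :=
  Finsupp.mapDomain_apply (Option.some_injective _) _ _

lemma embedExp_apply_none (b : Fin N →₀ ℕ) : embedExp b none = 0 :=
  Finsupp.mapDomain_notin_range _ _ (by simp)

lemma resOpt_apply (c : Option (Fin N) →₀ ℕ) (x : Fin N) : resOpt c x = c (some x) := rfl

lemma embedExp_le_iff {u : Fin N →₀ ℕ} {c : Option (Fin N) →₀ ℕ} :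
    embedExp u ≤ c ↔ u ≤ resOpt c := by
  constructor
  · intro h x
    have := Finsupp.le_def.mp h (some x)
    simpa [embedExp_apply_some, resOpt_apply] using this
  · intro h
    rw [Finsupp.le_def]
    intro o
    cases o with
    | none => simp [embedExp_apply_none]
    | some x => simpa [embedExp_apply_some, resOpt_apply] using Finsupp.le_def.mp h x

lemma embedExp_add_single_le_iff {u : Fin N →₀ ℕ} {c : Option (Fin N) →₀ ℕ} :
    embedExp u + Finsupp.single none 1 ≤ c ↔ u ≤ resOpt c ∧ 1 ≤ c none := by
  constructor
  · intro h
    refine ⟨fun x => ?_, ?_⟩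
    · have := Finsupp.le_def.mp h (some x)
      simpa [embedExp_apply_some, resOpt_apply, Finsupp.single_apply] using this
    · have := Finsupp.le_def.mp h none
      simpa [embedExp_apply_none] using this
  · rintro ⟨h1, h2⟩
    rw [Finsupp.le_def]
    intro o
    cases o with
    | none => simpa [embedExp_apply_none] using h2
    | some x => simpa [embedExp_apply_some, resOpt_apply, Finsupp.single_apply] using Finsupp.le_def.mp h1 x

lemma resOpt_embedExp (b : Fin N →₀ ℕ) : resOpt (embedExp b) = b := by
  ext x; rw [resOpt_apply, embedExp_apply_some]

lemma resOpt_add (c c' : Option (Fin N) →₀ ℕ) : resOpt (c + c') = resOpt c + resOpt c' := by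
  ext x; simp [resOpt_apply]

lemma embedExp_single (x : Fin N) (n : ℕ) :
    embedExp (Finsupp.single x n) = Finsupp.single (some x) n :=
  Finsupp.mapDomain_single

lemma decompOpt (c : Option (Fin N) →₀ ℕ) :
    c = embedExp (resOpt c) + Finsupp.single none (c none) := by
  ext o
  cases o with
  | none => simp [embedExp_apply_none]
  | some x => simp [embedExp_apply_some, resOpt_apply, Finsupp.single_apply]

variable (i : Fin N) (w : Fin N → (Fin d →₀ ℕ))

lemma weight_single_eq' {τ : Type*} (w' : τ → (Fin d →₀ ℕ)) (t : τ) (n : ℕ) :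
    weight w' (Finsupp.single t n) = n • w' t := by
  rw [Finsupp.weight_apply, Finsupp.sum_single_index]
  simp

lemma weight_embedExp (b : Fin N →₀ ℕ) :
    weight (wOpt i w) (embedExp b) = weight w b := by
  rw [embedExp, Finsupp.weight_apply, Finsupp.weight_apply]
  rw [Finsupp.sum_mapDomain_index (by intro a; exact zero_smul _ _)
    (by intro a m₁ m₂; exact add_smul _ _ _)]
  rfl

lemma weight_single_none (m : ℕ) :
    weight (wOpt i w) (Finsupp.single (none : Option (Fin N)) m) = m • w i :=
  weight_single_eq' _ _ _

lemma weight_single_some (x : Fin N) (m : ℕ) :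
    weight (wOpt i w) (Finsupp.single (some x) m) = m • w x :=
  weight_single_eq' _ _ _

lemma pp_le_iff_of_ge {u : Fin N →₀ ℕ} (h2 : 2 ≤ u i) (c : Option (Fin N) →₀ ℕ) :
    partialPolarGen i u ≤ c ↔ (u - Finsupp.single i 1 ≤ resOpt c ∧ 1 ≤ c none) := by
  rw [partialPolarGen, if_pos h2]
  exact embedExp_add_single_le_iff

lemma pp_le_iff_of_lt {u : Fin N →₀ ℕ} (h2 : ¬ 2 ≤ u i) (c : Option (Fin N) →₀ ℕ) :
    partialPolarGen i u ≤ c ↔ u ≤ resOpt c := by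
  rw [partialPolarGen, if_neg h2]
  exact embedExp_le_iff

variable {s : ℕ} (g : Fin s → (Fin N →₀ ℕ))

/-- The standard-monomial set for `I` in multidegree `a`. -/
def SetN (a : Fin d →₀ ℕ) : Set (Fin N →₀ ℕ) :=
  {b | weight w b = a ∧ ∀ j, ¬ g j ≤ b}

/-- The standard-monomial set for `I'` in multidegree `a`. -/
def SetO (a : Fin d →₀ ℕ) : Set (Option (Fin N) →₀ ℕ) :=
  {c | weight (wOpt i w) c = a ∧ ∀ j, ¬ partialPolarGen i (g j) ≤ c}

lemma two_le_of_le {c : Option (Fin N) →₀ ℕ} (hc : ∀ j, ¬ partialPolarGen i (g j) ≤ c)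
    {j : Fin s} (hj : g j ≤ resOpt c) : 2 ≤ g j i := by
  by_contra h2
  exact hc j ((pp_le_iff_of_lt i h2 c).mpr hj)

lemma embed_mem {a : Fin d →₀ ℕ} {b : Fin N →₀ ℕ} (hb : b ∈ SetN w g a) :
    embedExp b ∈ SetO i w g a := by
  refine ⟨by rw [weight_embedExp]; exact hb.1, fun j h => ?_⟩
  rcases le_or_gt 2 (g j i) with h2 | h2
  · have := ((pp_le_iff_of_ge i h2 _).mp h).2
    rw [embedExp_apply_none] at this
    omega
  · exact hb.2 j (by simpa [resOpt_embedExp] using (pp_le_iff_of_lt i (by omega) _).mp h)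

lemma mem_embed_image {a : Fin d →₀ ℕ} {c : Option (Fin N) →₀ ℕ} (hc : c ∈ SetO i w g a)
    (h0 : c none = 0) (hstd : ∀ j, ¬ g j ≤ resOpt c) :
    c ∈ embedExp '' (SetN w g a) := by
  refine ⟨resOpt c, ⟨?_, hstd⟩, ?_⟩
  · rw [← weight_embedExp i w, ← hc.1]
    congr 1
    conv_rhs => rw [decompOpt c, h0]
    simp
  · conv_rhs => rw [decompOpt c, h0]
    simp

lemma weight_mono' {τ : Type*} (w' : τ → (Fin d →₀ ℕ)) {u v : τ →₀ ℕ} (h : u ≤ v) :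
    weight w' u ≤ weight w' v := by
  obtain ⟨c, rfl⟩ := le_iff_exists_add.mp h
  simp [map_add]

lemma finite_weight_eq' {τ : Type*} [Fintype τ] (w' : τ → (Fin d →₀ ℕ))
    (hpos : ∀ t, w' t ≠ 0) (a : Fin d →₀ ℕ) :
    {b : τ →₀ ℕ | weight w' b = a}.Finite := by
  set M : ℕ := ∑ k, a k with hM
  have hsub : {b : τ →₀ ℕ | weight w' b = a} ⊆
      Set.Iic (equivFunOnFinite.symm fun _ : τ => M) := by
    intro b hb t
    show _ ≤ M
    obtain ⟨k, hk⟩ : ∃ k, w' t k ≠ 0 := by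
      by_contra hc
      push_neg at hc
      exact hpos t (Finsupp.ext fun k => hc k)
    have h1 : (b t) • w' t ≤ a := by
      rw [← hb, ← weight_single_eq' w' t (b t)]
      refine weight_mono' w' ?_
      intro x
      classical
      rcases eq_or_ne t x with rfl | hx
      · simp
      · simp [Finsupp.single_apply, hx]
    have h2 : b t * w' t k ≤ a k := by simpa using h1 k
    calc b t ≤ b t * w' t k := Nat.le_mul_of_pos_right _ (Nat.pos_of_ne_zero hk)
    _ ≤ a k := h2
    _ ≤ M := by
      rw [hM]; exact Finset.single_le_sum (fun _ _ => Nat.zero_le _) (Finset.mem_univ k)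
  exact (Set.finite_Iic _).subset hsub

lemma resOpt_single_none (m : ℕ) :
    resOpt (Finsupp.single (none : Option (Fin N)) m) = 0 := by
  ext x; simp [resOpt_apply, Finsupp.single_apply]

lemma resOpt_single_some (x : Fin N) (m : ℕ) :
    resOpt (Finsupp.single (some x) m) = Finsupp.single x m := by
  ext y
  rw [resOpt_apply]
  simp [Finsupp.single_apply, Option.some_inj]

lemma resOpt_sub (c c' : Option (Fin N) →₀ ℕ) :
    resOpt (c - c') = resOpt c - resOpt c' := by
  ext x; simp [resOpt_apply, Finsupp.tsub_apply]

lemma not_le_case {a : Fin d →₀ ℕ} {c : Option (Fin N) →₀ ℕ} (hc : c ∈ SetO i w g a)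
    (hna : ¬ w i ≤ a) : c none = 0 ∧ ∀ j, ¬ g j ≤ resOpt c := by
  constructor
  · by_contra h1
    have h1' : 1 ≤ c none := by omega
    have : w i ≤ a := by
      calc w i = weight (wOpt i w) (Finsupp.single (none : Option (Fin N)) 1) := by
            rw [weight_single_none, one_smul]
      _ ≤ weight (wOpt i w) c := weight_mono' _ (Finsupp.single_le_iff.mpr h1')
      _ = a := hc.1
    exact hna this
  · intro j hj
    have h2 : 2 ≤ g j i := two_le_of_le i g hc.2 hj
    have h1' : 1 ≤ c (some i) := by
      have := Finsupp.le_def.mp hj i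
      rw [resOpt_apply] at this
      omega
    have : w i ≤ a := by
      calc w i = weight (wOpt i w) (Finsupp.single (some i) 1) := by
            rw [weight_single_some, one_smul]
      _ ≤ weight (wOpt i w) c := weight_mono' _ (Finsupp.single_le_iff.mpr h1')
      _ = a := hc.1
    exact hna this

lemma mem_B_iff {a : Fin d →₀ ℕ} {c : Option (Fin N) →₀ ℕ} :
    c ∈ SetO i w g a \ embedExp '' SetN w g a ↔
      c ∈ SetO i w g a ∧ (1 ≤ c none ∨ ∃ j, g j ≤ resOpt c) := by
  constructor
  · rintro ⟨hc, hnot⟩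
    refine ⟨hc, ?_⟩
    by_contra h
    push_neg at h
    exact hnot (mem_embed_image i w g hc (by omega) h.2)
  · rintro ⟨hc, hor⟩
    refine ⟨hc, fun hmem => ?_⟩
    obtain ⟨b, hb, rfl⟩ := hmem
    rcases hor with h1 | ⟨j, hj⟩
    · rw [embedExp_apply_none] at h1; omega
    · rw [resOpt_embedExp] at hj; exact hb.2 j hj

/-- the map from `B` to `SetO (a - w i)`. -/
noncomputable def tauMap (i : Fin N) (c : Option (Fin N) →₀ ℕ) : Option (Fin N) →₀ ℕ :=
  if 1 ≤ c none then c - Finsupp.single none 1 else c - Finsupp.single (some i) 1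

/-- the map from `SetO (a - w i)` to `B`. -/
noncomputable def sigmaMap (i : Fin N) (g : Fin s → (Fin N →₀ ℕ))
    (dd : Option (Fin N) →₀ ℕ) : Option (Fin N) →₀ ℕ :=
  if ∀ j, ¬ partialPolarGen i (g j) ≤ dd + Finsupp.single none 1
  then dd + Finsupp.single none 1
  else dd + Finsupp.single (some i) 1

lemma tau_mapsTo (a : Fin d →₀ ℕ) :
    Set.MapsTo (tauMap i) (SetO i w g a \ embedExp '' SetN w g a)
      (SetO i w g (a - w i)) := by
  intro c hcB
  obtain ⟨hc, hor⟩ := (mem_B_iff i w g).mp hcB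
  rw [tauMap]
  by_cases h1 : 1 ≤ c none
  · rw [if_pos h1]
    have hle : Finsupp.single (none : Option (Fin N)) 1 ≤ c := Finsupp.single_le_iff.mpr h1
    have hsum : (c - Finsupp.single none 1) + Finsupp.single none 1 = c :=
      tsub_add_cancel_of_le hle
    constructor
    · have hw : weight (wOpt i w) (c - Finsupp.single none 1) + w i = a := by
        rw [← hc.1]
        conv_rhs => rw [← hsum]
        rw [map_add, weight_single_none, one_smul]
      rw [← hw, add_tsub_cancel_right]
    · exact fun j hj => hc.2 j (hj.trans tsub_le_self)
  · rw [if_neg h1]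
    obtain ⟨j, hj⟩ : ∃ j, g j ≤ resOpt c := by
      rcases hor with h | h
      · omega
      · exact h
    have h2 : 2 ≤ g j i := two_le_of_le i g hc.2 hj
    have h1' : 1 ≤ c (some i) := by
      have := Finsupp.le_def.mp hj i
      rw [resOpt_apply] at this
      omega
    have hle : Finsupp.single (some i) 1 ≤ c := Finsupp.single_le_iff.mpr h1'
    have hsum : (c - Finsupp.single (some i) 1) + Finsupp.single (some i) 1 = c :=
      tsub_add_cancel_of_le hle
    constructor
    · have hw : weight (wOpt i w) (c - Finsupp.single (some i) 1) + w i = a := by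
        rw [← hc.1]
        conv_rhs => rw [← hsum]
        rw [map_add, weight_single_some, one_smul]
      rw [← hw, add_tsub_cancel_right]
    · exact fun k hk => hc.2 k (hk.trans tsub_le_self)

lemma sigma_aux {dd : Option (Fin N) →₀ ℕ}
    (hstd : ∀ j, ¬ partialPolarGen i (g j) ≤ dd) {j : Fin s}
    (hj : partialPolarGen i (g j) ≤ dd + Finsupp.single none 1) :
    2 ≤ g j i ∧ dd none = 0 ∧ g j - Finsupp.single i 1 ≤ resOpt dd := by
  have hres : resOpt (dd + Finsupp.single (none : Option (Fin N)) 1) = resOpt dd := by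
    rw [resOpt_add, resOpt_single_none, add_zero]
  have h2 : 2 ≤ g j i := by
    by_contra h2
    have := (pp_le_iff_of_lt i h2 _).mp hj
    rw [hres] at this
    exact hstd j ((pp_le_iff_of_lt i h2 _).mpr this)
  obtain ⟨hA, -⟩ := (pp_le_iff_of_ge i h2 _).mp hj
  rw [hres] at hA
  have h0 : dd none = 0 := by
    by_contra h0
    exact hstd j ((pp_le_iff_of_ge i h2 _).mpr ⟨hA, by omega⟩)
  exact ⟨h2, h0, hA⟩

lemma sigma_mapsTo {a : Fin d →₀ ℕ} (hwa : w i ≤ a) :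
    Set.MapsTo (sigmaMap i g) (SetO i w g (a - w i))
      (SetO i w g a \ embedExp '' SetN w g a) := by
  intro dd hdd
  rw [sigmaMap]
  by_cases hgood : ∀ j, ¬ partialPolarGen i (g j) ≤ dd + Finsupp.single none 1
  · rw [if_pos hgood]
    rw [mem_B_iff]
    refine ⟨⟨?_, hgood⟩, Or.inl (by simp)⟩
    rw [map_add, weight_single_none, one_smul, hdd.1, tsub_add_cancel_of_le hwa]
  · rw [if_neg hgood]
    push_neg at hgood
    obtain ⟨j, hj⟩ := hgood
    obtain ⟨h2, h0, hA⟩ := sigma_aux i g hdd.2 hj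
    have hresc : resOpt (dd + Finsupp.single (some i) 1) = resOpt dd + Finsupp.single i 1 := by
      rw [resOpt_add, resOpt_single_some]
    have hgj : g j ≤ resOpt dd + Finsupp.single i 1 := by
      have hsle : Finsupp.single i 1 ≤ g j := Finsupp.single_le_iff.mpr (by omega)
      calc g j = (g j - Finsupp.single i 1) + Finsupp.single i 1 :=
            (tsub_add_cancel_of_le hsle).symm
      _ ≤ resOpt dd + Finsupp.single i 1 := add_le_add_left hA _
    rw [mem_B_iff]
    refine ⟨⟨?_, ?_⟩, Or.inr ⟨j, by rw [hresc]; exact hgj⟩⟩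
    · rw [map_add, weight_single_some, one_smul, hdd.1, tsub_add_cancel_of_le hwa]
    · intro k hk
      rcases le_or_gt 2 (g k i) with hk2 | hk2
      · have := ((pp_le_iff_of_ge i hk2 _).mp hk).2
        simp [Finsupp.single_apply, h0] at this
      · have hk2' : ¬ 2 ≤ g k i := by omega
        have hkle := (pp_le_iff_of_lt i hk2' _).mp hk
        rw [hresc] at hkle
        have hknle : ¬ g k ≤ resOpt dd :=
          fun h => hdd.2 k ((pp_le_iff_of_lt i hk2' _).mpr h)
        rw [Finsupp.le_def] at hknle
        push_neg at hknle
        obtain ⟨x, hx⟩ := hknle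
        have hb1 := Finsupp.le_def.mp hkle x
        have hb2 := Finsupp.le_def.mp hA i
        simp only [Finsupp.coe_add, Pi.add_apply, Finsupp.single_apply,
          Finsupp.tsub_apply, eq_self_iff_true, if_true] at hb1 hb2
        rcases eq_or_ne i x with rfl | hxi
        · rw [if_pos rfl] at hb1
          omega
        · rw [if_neg hxi, add_zero] at hb1
          omega

lemma tau_sigma_invOn (a : Fin d →₀ ℕ) :
    Set.InvOn (sigmaMap i g) (tauMap i) (SetO i w g a \ embedExp '' SetN w g a)
      (SetO i w g (a - w i)) := by
  constructor
  · -- LeftInvOn (sigmaMap i g) (tauMap i) B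
    intro c hcB
    obtain ⟨hc, hor⟩ := (mem_B_iff i w g).mp hcB
    by_cases h1 : 1 ≤ c none
    · rw [tauMap, if_pos h1]
      have hsum : (c - Finsupp.single (none : Option (Fin N)) 1) + Finsupp.single none 1 = c :=
        tsub_add_cancel_of_le (Finsupp.single_le_iff.mpr h1)
      rw [sigmaMap, if_pos (by rw [hsum]; exact hc.2), hsum]
    · rw [tauMap, if_neg h1]
      obtain ⟨j, hj⟩ : ∃ j, g j ≤ resOpt c := by
        rcases hor with h | h
        · omega
        · exact h
      have h2 : 2 ≤ g j i := two_le_of_le i g hc.2 hj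
      have h1' : 1 ≤ c (some i) := by
        have := Finsupp.le_def.mp hj i
        rw [resOpt_apply] at this
        omega
      have hsum : (c - Finsupp.single (some i) 1) + Finsupp.single (some i) 1 = c :=
        tsub_add_cancel_of_le (Finsupp.single_le_iff.mpr h1')
      have hbad : partialPolarGen i (g j) ≤
          (c - Finsupp.single (some i) 1) + Finsupp.single (none : Option (Fin N)) 1 := by
        rw [pp_le_iff_of_ge i h2]
        constructor
        · rw [resOpt_add, resOpt_single_none, add_zero, resOpt_sub, resOpt_single_some]
          exact tsub_le_tsub_right hj _
        · simp
      rw [sigmaMap, if_neg (by push_neg; exact ⟨j, hbad⟩), hsum]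
  · -- RightInvOn : LeftInvOn (tauMap i) (sigmaMap i g) (SetO (a - w i))
    intro dd hdd
    by_cases hgood : ∀ j, ¬ partialPolarGen i (g j) ≤ dd + Finsupp.single none 1
    · rw [sigmaMap, if_pos hgood, tauMap, if_pos (by simp)]
      exact add_tsub_cancel_right _ _
    · rw [sigmaMap, if_neg hgood]
      push_neg at hgood
      obtain ⟨j, hj⟩ := hgood
      obtain ⟨h2, h0, hA⟩ := sigma_aux i g hdd.2 hj
      rw [tauMap, if_neg (by simp [Finsupp.single_apply, h0])]
      exact add_tsub_cancel_right _ _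

lemma polar_ncard (hpos : ∀ t, w t ≠ 0) (a : Fin d →₀ ℕ) :
    (SetO i w g a).ncard = (SetN w g a).ncard +
      if w i ≤ a then (SetO i w g (a - w i)).ncard else 0 := by
  have hposO : ∀ o : Option (Fin N), wOpt i w o ≠ 0 := by
    rintro (_ | x)
    · exact hpos i
    · exact hpos x
  have hfinO : ∀ a', (SetO i w g a').Finite := fun a' =>
    (finite_weight_eq' (wOpt i w) hposO a').subset fun c hc => hc.1
  have hfinN : (SetN w g a).Finite := (finite_weight_eq' w hpos a).subset fun b hb => hb.1
  have hEinj : Function.Injective (embedExp (N := N)) :=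
    Finsupp.mapDomain_injective (Option.some_injective _)
  by_cases hwa : w i ≤ a
  · rw [if_pos hwa]
    have hsub : embedExp '' SetN w g a ⊆ SetO i w g a := by
      rintro _ ⟨b, hb, rfl⟩
      exact embed_mem i w g hb
    have hunion : SetO i w g a = embedExp '' SetN w g a ∪ (SetO i w g a \ embedExp '' SetN w g a) :=
      (Set.union_diff_cancel hsub).symm
    rw [hunion, Set.ncard_union_eq Set.disjoint_sdiff_right (hfinN.image _)
      ((hfinO a).diff), Set.ncard_image_of_injective _ hEinj]
    congr 1
    have hbij : Set.BijOn (tauMap i) (SetO i w g a \ embedExp '' SetN w g a)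
        (SetO i w g (a - w i)) :=
      Set.InvOn.bijOn (tau_sigma_invOn i w g a) (tau_mapsTo i w g a) (sigma_mapsTo i w g hwa)
    rw [← hbij.image_eq, Set.ncard_image_of_injOn hbij.injOn]
  · rw [if_neg hwa, add_zero]
    have : SetO i w g a = embedExp '' SetN w g a := by
      apply Set.Subset.antisymm
      · intro c hc
        obtain ⟨h0, hstd⟩ := not_le_case i w g hc hwa
        exact mem_embed_image i w g hc h0 hstd
      · rintro _ ⟨b, hb, rfl⟩
        exact embed_mem i w g hb
    rw [this, Set.ncard_image_of_injective _ hEinj]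

end Aux

/-- Partial polarization preserves the multigraded K-polynomial:
`K_{R/I}(t) = K_{R'/I'}(t)`, where the new variable `y` has the weight of `x_i`. -/
theorem partial_polarization_preserves_kpolynomial {N s d : ℕ} (i : Fin N)
    (w : Fin N → (Fin d →₀ ℕ)) (hpos : ∀ i', w i' ≠ 0)
    (g : Fin s → (Fin N →₀ ℕ))
    (I : Ideal (MvPolynomial (Fin N) ℂ))
    (hgen : I = Ideal.span (Set.range fun j => MvPolynomial.monomial (g j) (1 : ℂ)))
    (hmin : ∀ j k : Fin s, g j ≤ g k → j = k)
    (hx : ∃ j, 2 ≤ g j i)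
    (I' : Ideal (MvPolynomial (Option (Fin N)) ℂ))
    (hI' : I' = Ideal.span
      (Set.range fun j => MvPolynomial.monomial (partialPolarGen i (g j)) (1 : ℂ)))
    (K K' : MvPolynomial (Fin d) ℤ)
    (hK : IsKPolynomial w I K)
    (hK' : IsKPolynomial (fun o : Option (Fin N) => o.elim (w i) w) I' K') :
    K = K' := by
  classical
  have hwOdef : (fun o : Option (Fin N) => o.elim (w i) w) = wOpt i w := rfl
  have hposO : ∀ o : Option (Fin N), wOpt i w o ≠ 0 := by
    rintro (_ | x)
    · exact hpos i
    · exact hpos x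
  -- dimension formulas
  have hdimN : ∀ a, mgradedDim w I a = (SetN w g a).ncard := by
    intro a
    rw [hgen, show (Set.range fun j => MvPolynomial.monomial (g j) (1 : ℂ)) =
        (fun u => MvPolynomial.monomial u (1 : ℂ)) '' Set.range g from by
      rw [← Set.range_comp]; rfl]
    rw [mgradedDim_span_monomials w hpos (Set.range g) a, Nat.card_coe_set_eq]
    congr 1
    ext b
    simp [SetN]
  have hdimO : ∀ a, mgradedDim (wOpt i w) I' a = (SetO i w g a).ncard := by
    intro a
    rw [hI', show (Set.range fun j => MvPolynomial.monomial (partialPolarGen i (g j)) (1 : ℂ)) =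
        (fun u => MvPolynomial.monomial u (1 : ℂ)) ''
          Set.range (fun j => partialPolarGen i (g j)) from by
      rw [← Set.range_comp]; rfl]
    rw [mgradedDim_span_monomials (wOpt i w) hposO _ a, Nat.card_coe_set_eq]
    congr 1
    ext c
    simp [SetO]
  -- the Hilbert series identity
  have hseries : hilbSeries w I =
      ((1 - MvPolynomial.monomial (w i) (1 : ℤ) : MvPolynomial (Fin d) ℤ) :
        MvPowerSeries (Fin d) ℤ) * hilbSeries (wOpt i w) I' := by
    have hcoe : ((1 - MvPolynomial.monomial (w i) (1 : ℤ) : MvPolynomial (Fin d) ℤ) :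
        MvPowerSeries (Fin d) ℤ) = 1 - MvPowerSeries.monomial (w i) 1 := by
      rw [show ((1 - MvPolynomial.monomial (w i) (1 : ℤ) : MvPolynomial (Fin d) ℤ) :
          MvPowerSeries (Fin d) ℤ)
          = MvPolynomial.coeToMvPowerSeries.ringHom (1 - MvPolynomial.monomial (w i) (1 : ℤ))
          from rfl, map_sub, map_one, MvPolynomial.coeToMvPowerSeries.ringHom_apply,
        MvPolynomial.coe_monomial]
    rw [hcoe, sub_mul, one_mul]
    apply MvPowerSeries.ext
    intro a
    rw [map_sub, MvPowerSeries.coeff_monomial_mul, one_mul]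
    have e1 : (MvPowerSeries.coeff a) (hilbSeries w I) = ((SetN w g a).ncard : ℤ) := by
      show hilbSeries w I a = _
      rw [hilbSeries, hdimN]
    have e2 : (MvPowerSeries.coeff a) (hilbSeries (wOpt i w) I')
        = ((SetO i w g a).ncard : ℤ) := by
      show hilbSeries (wOpt i w) I' a = _
      rw [hilbSeries, hdimO]
    have e3 : (MvPowerSeries.coeff (a - w i)) (hilbSeries (wOpt i w) I')
        = ((SetO i w g (a - w i)).ncard : ℤ) := by
      show hilbSeries (wOpt i w) I' (a - w i) = _
      rw [hilbSeries, hdimO]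
    rw [e1, e2]
    have hcard := polar_ncard i w g hpos a
    split_ifs with h
    · rw [e3]
      rw [if_pos h] at hcard
      rw [hcard]
      push_cast
      ring
    · rw [if_neg h, add_zero] at hcard
      rw [hcard, sub_zero]
  -- conclude
  have hKeq : (K : MvPowerSeries (Fin d) ℤ) =
      ((∏ v : Fin N, (1 - MvPolynomial.monomial (w v) (1 : ℤ)) : MvPolynomial (Fin d) ℤ) :
        MvPowerSeries (Fin d) ℤ) * hilbSeries w I := hK
  have hKeq' : (K' : MvPowerSeries (Fin d) ℤ) =
      ((∏ v : Option (Fin N), (1 - MvPolynomial.monomial ((wOpt i w) v) (1 : ℤ)) :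
          MvPolynomial (Fin d) ℤ) : MvPowerSeries (Fin d) ℤ) *
        hilbSeries (wOpt i w) I' := hK'
  apply MvPolynomial.coe_inj.mp
  rw [hKeq, hKeq']
  rw [show (∏ v : Option (Fin N), (1 - MvPolynomial.monomial ((wOpt i w) v) (1 : ℤ)) :
      MvPolynomial (Fin d) ℤ) =
      (1 - MvPolynomial.monomial (w i) (1 : ℤ)) *
        ∏ v : Fin N, (1 - MvPolynomial.monomial (w v) (1 : ℤ)) from Fintype.prod_option _]
  rw [MvPolynomial.coe_mul, hseries]
  ring
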